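/- If v is an interior node and v' is a maximal neighbor of v, then the boundary circles ∂Z(v) and ∂Z(v') intersect in exactly two distinct points. -/

import Mathlib

open Metric

noncomputable section

/-- Points of the plane. -/
abbrev Pt := EuclideanSpace ℝ (Fin 2)

/-- `Zd r p` : the closed disk (communication zone) of radius `r` centered at `p`. -/
def Zd (r : ℝ) (p : Pt) : Set Pt := Metric.closedBall p r

/-- `Zb r p` : the boundary circle of the communication zone of `p`. -/
def Zb (r : ℝ) (p : Pt) : Set Pt := Metric.sphere p r

/-- The arc-containment relation `a ⪯_v b`. -/
def arcLe (r : ℝ) (v a b : Pt) : Prop := Zd r a ∩ Zb r v ⊆ Zd r b ∩ Zb r v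

/-- `u` is a neighbor of `v`. -/
def Nbr (r : ℝ) (v u : Pt) : Prop := u ≠ v ∧ dist u v ≤ r

/-- General position: no three distinct points of `V` are collinear. -/
def GenPos (V : Set Pt) : Prop :=
  ∀ a ∈ V, ∀ b ∈ V, ∀ c ∈ V, a ≠ b → a ≠ c → b ≠ c → ¬ Collinear ℝ ({a, b, c} : Set Pt)

/-- `u` is a maximal neighbor of `v` within `V`. -/
def MaxNbr (V : Set Pt) (r : ℝ) (v u : Pt) : Prop :=
  u ∈ V ∧ Nbr r v u ∧ ∀ u' ∈ V, u' ≠ u → Nbr r v u' → ¬ arcLe r v u u'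

/-- `v` is an interior node of `V`. -/
def IsInterior (V : Set Pt) (r : ℝ) (v : Pt) : Prop :=
  ∀ z ∈ Zb r v, ∃ v' ∈ V, v' ≠ v ∧ z ∈ Zd r v'

/-- Counterclockwise rotation by `π/2`. -/
def rot90 (x : Pt) : Pt := (WithLp.equiv 2 (Fin 2 → ℝ)).symm ![-(x 1), x 0]

/-- The boundary intersection `CCW(v, v')` of the circles `∂Z(v)` and `∂Z(v')`:
traversing from `CCW(v,v')` to `CW(v,v')` clockwise along `∂Z(v)` sweeps an angle `< π`. -/
def ccwPt (r : ℝ) (v v' : Pt) : Pt :=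
  midpoint ℝ v v' + (Real.sqrt (r ^ 2 - (dist v v' / 2) ^ 2) / dist v v') • rot90 (v' - v)

/-- The boundary intersection `CW(v, v')`. -/
def cwPt (r : ℝ) (v v' : Pt) : Pt :=
  midpoint ℝ v v' - (Real.sqrt (r ^ 2 - (dist v v' / 2) ^ 2) / dist v v') • rot90 (v' - v)

/-- A communication wheel of `v` with `m` rim nodes `w 0, …, w (m-1)` (indices mod `m`). -/
def IsCommWheel (V : Set Pt) (r : ℝ) (v : Pt) (m : ℕ) (w : ZMod m → Pt) : Prop :=
  3 ≤ m ∧ Function.Injective w ∧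
  (∀ i, MaxNbr V r v (w i)) ∧
  (∀ i, dist (w i) (w (i + 1)) ≤ r) ∧
  (∀ i, ccwPt r v (w i) ∈ Zd r (w (i + 1)) ∧ cwPt r v (w i) ∈ Zd r (w (i - 1)))

lemma dist_sq_coord (v v' : Pt) : dist v v' ^ 2 = (v 0 - v' 0)^2 + (v 1 - v' 1)^2 := by
  rw [EuclideanSpace.dist_eq, Real.sq_sqrt (by positivity)]
  simp [Fin.sum_univ_two, Real.dist_eq, sq_abs]

lemma mem_sphere_coord (x : Pt) (r : ℝ) (hr : 0 ≤ r) (v : Pt) :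
    x ∈ sphere v r ↔ (x 0 - v 0)^2 + (x 1 - v 1)^2 = r^2 := by
  rw [mem_sphere, ← dist_sq_coord]
  constructor
  · intro h; rw [h]
  · intro h; nlinarith [dist_nonneg (x := x) (y := v)]

theorem two_pts (r : ℝ) (hr : 0 < r) (v v' : Pt) (hne : v' ≠ v) (hd : dist v' v ≤ r) :
    ∃ p q : Pt, p ≠ q ∧ Zb r v ∩ Zb r v' = {p, q} := by
  set a0 := v' 0 - v 0 with ha0
  set a1 := v' 1 - v 1 with ha1
  set D := dist v v' with hDdef
  set s := Real.sqrt (r ^ 2 - (D / 2) ^ 2) with hsdef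
  have hD0 : 0 < D := dist_pos.mpr (fun h => hne h.symm)
  have hDr : D ≤ r := by rwa [hDdef, dist_comm]
  have hDsq : D ^ 2 = a0 ^ 2 + a1 ^ 2 := by
    rw [hDdef, dist_sq_coord]; ring
  have hpos : 0 < r ^ 2 - (D / 2) ^ 2 := by nlinarith
  have hs2 : s ^ 2 = r ^ 2 - (D / 2) ^ 2 := Real.sq_sqrt hpos.le
  have hs0 : 0 < s := Real.sqrt_pos.mpr hpos
  have hane : a0 ≠ 0 ∨ a1 ≠ 0 := by
    by_contra h
    push_neg at h
    nlinarith [h.1, h.2, sq_nonneg D]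
  set p := ccwPt r v v' with hp
  set q := cwPt r v v' with hq
  have hp0 : p 0 = (v 0 + v' 0)/2 - (s/D) * a1 := by
    simp [hp, ccwPt, rot90, midpoint_eq_smul_add, PiLp.add_apply, PiLp.smul_apply,
      PiLp.sub_apply, ← hDdef, ← hsdef, ← ha1]
    ring
  have hp1 : p 1 = (v 1 + v' 1)/2 + (s/D) * a0 := by
    simp [hp, ccwPt, rot90, midpoint_eq_smul_add, PiLp.add_apply, PiLp.smul_apply,
      PiLp.sub_apply, ← hDdef, ← hsdef, ← ha0]
    ring
  have hq0 : q 0 = (v 0 + v' 0)/2 + (s/D) * a1 := by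
    simp [hq, cwPt, rot90, midpoint_eq_smul_add, PiLp.add_apply, PiLp.smul_apply,
      PiLp.sub_apply, ← hDdef, ← hsdef, ← ha1]
    ring
  have hq1 : q 1 = (v 1 + v' 1)/2 - (s/D) * a0 := by
    simp [hq, cwPt, rot90, midpoint_eq_smul_add, PiLp.add_apply, PiLp.smul_apply,
      PiLp.sub_apply, ← hDdef, ← hsdef, ← ha0]
    ring
  set c := s / D with hcdef
  have hc : c * D = s := div_mul_cancel₀ s hD0.ne'
  have hc0 : 0 < c := div_pos hs0 hD0
  have hD2 : (D:ℝ) ^ 2 ≠ 0 := pow_ne_zero _ hD0.ne'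
  refine ⟨p, q, ?_, ?_⟩
  · intro h
    have h0 : p 0 = q 0 := by rw [h]
    have h1 : p 1 = q 1 := by rw [h]
    rw [hp0, hq0] at h0
    rw [hp1, hq1] at h1
    have ha1z : a1 = 0 := by
      have hz : c * a1 = 0 := by linear_combination (-1/2) * h0
      rcases mul_eq_zero.mp hz with h' | h'
      · exact absurd h' hc0.ne'
      · exact h'
    have ha0z : a0 = 0 := by
      have hz : c * a0 = 0 := by linear_combination (1/2) * h1
      rcases mul_eq_zero.mp hz with h' | h'
      · exact absurd h' hc0.ne'
      · exact h'
    rcases hane with h' | h' <;> exact h' (by assumption)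
  · ext x
    simp only [Zb, Set.mem_inter_iff, mem_sphere_coord _ r hr.le, Set.mem_insert_iff,
      Set.mem_singleton_iff]
    constructor
    · rintro ⟨e1, e2⟩
      set y0 := x 0 - (v 0 + v' 0)/2 with hy0def
      set y1 := x 1 - (v 1 + v' 1)/2 with hy1def
      have heq : a0 * y0 + a1 * y1 = 0 := by
        linear_combination (e1 - e2) / 2
      have hnorm : y0 ^ 2 + y1 ^ 2 = s ^ 2 := by
        linear_combination e1/2 + e2/2 + hDsq/4 - hs2
      have hcross : (a1 * y0 - a0 * y1 - s * D) * (a1 * y0 - a0 * y1 + s * D) = 0 := by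
        linear_combination (a0^2 + a1^2) * hnorm - s^2 * hDsq - (a0*y0 + a1*y1) * heq
      rcases mul_eq_zero.mp hcross with hE | hE
      · -- a1 y0 - a0 y1 = s D : x = q
        right
        have hx0 : y0 * D ^ 2 = a1 * (s * D) := by
          linear_combination a0 * heq + a1 * hE + y0 * hDsq
        have hx1 : y1 * D ^ 2 = -a0 * (s * D) := by
          linear_combination a1 * heq - a0 * hE + y1 * hDsq
        have hy0' : y0 = c * a1 := by
          have hz : (y0 - c * a1) * D ^ 2 = 0 := by
            linear_combination hx0 - a1 * D * hc
          have := (mul_eq_zero.mp hz).resolve_right hD2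
          linarith
        have hy1' : y1 = -(c * a0) := by
          have hz : (y1 + c * a0) * D ^ 2 = 0 := by
            linear_combination hx1 + a0 * D * hc
          have := (mul_eq_zero.mp hz).resolve_right hD2
          linarith
        ext i; fin_cases i
        · show x 0 = q 0
          rw [hq0]; linear_combination hy0' + hy0def
        · show x 1 = q 1
          rw [hq1]; linear_combination hy1' + hy1def
      · -- a1 y0 - a0 y1 = -s D : x = p
        left
        have hx0 : y0 * D ^ 2 = -(a1 * (s * D)) := by
          linear_combination a0 * heq + a1 * hE + y0 * hDsq
        have hx1 : y1 * D ^ 2 = a0 * (s * D) := by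
          linear_combination a1 * heq - a0 * hE + y1 * hDsq
        have hy0' : y0 = -(c * a1) := by
          have hz : (y0 + c * a1) * D ^ 2 = 0 := by
            linear_combination hx0 + a1 * D * hc
          have := (mul_eq_zero.mp hz).resolve_right hD2
          linarith
        have hy1' : y1 = c * a0 := by
          have hz : (y1 - c * a0) * D ^ 2 = 0 := by
            linear_combination hx1 - a0 * D * hc
          have := (mul_eq_zero.mp hz).resolve_right hD2
          linarith
        ext i; fin_cases i
        · show x 0 = p 0
          rw [hp0]; linear_combination hy0' + hy0def
        · show x 1 = p 1
          rw [hp1]; linear_combination hy1' + hy1def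
    · rintro (rfl | rfl)
      · constructor
        · rw [hp0, hp1]
          linear_combination (-(1/4) - c^2) * hDsq + (c*D + s) * hc + hs2
        · rw [hp0, hp1]
          linear_combination (-(1/4) - c^2) * hDsq + (c*D + s) * hc + hs2
      · constructor
        · rw [hq0, hq1]
          linear_combination (-(1/4) - c^2) * hDsq + (c*D + s) * hc + hs2
        · rw [hq0, hq1]
          linear_combination (-(1/4) - c^2) * hDsq + (c*D + s) * hc + hs2

/-- boundary circles of a node and a maximal neighbor meet in exactly two points. -/
theorem stmt_6 (V : Set Pt) (hV : V.Finite) (hgp : GenPos V) (r : ℝ) (hr : 0 < r)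
    (v v' : Pt) (hv : v ∈ V) (hint : IsInterior V r v) (hmax : MaxNbr V r v v') :
    ∃ p q : Pt, p ≠ q ∧ Zb r v ∩ Zb r v' = {p, q} :=
  two_pts r hr v v' hmax.2.1.1 hmax.2.1.2
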